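/- The number of simplicial tree-child networks with exactly k reticulations and ℓ leaves labelled by {1,...,ℓ} is STC_{ℓ,k} = C(ℓ,k)·(2ℓ−2)!/(2^{ℓ−1}·(ℓ−k−1)!), and for fixed k this satisfies STC_{ℓ,k} ~ (sqrt(2)/(2·k!))·ℓ^{2k−1}·(2/e)^ℓ·ℓ^ℓ as ℓ → ∞. -/

import Mathlib

open Filter Real Stirling

private lemma fact_eq {n : ℕ} (hn : 1 ≤ n) :
    (n.factorial : ℝ) = stirlingSeq n * (Real.sqrt (2 * n) * ((n : ℝ) / Real.exp 1) ^ n) := by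
  have h : (0:ℝ) < n := by exact_mod_cast hn
  have hne : Real.sqrt (2 * n) * ((n : ℝ) / Real.exp 1) ^ n ≠ 0 := by positivity
  unfold stirlingSeq
  field_simp

private lemma tendsto_base_pow (c : ℝ) (p q : ℕ) (hp : 0 < p) :
    Tendsto (fun ℓ : ℕ => (((ℓ:ℝ) - c) / (ℓ:ℝ)) ^ (p * ℓ - q)) atTop
      (nhds (Real.exp (-c) ^ p)) := by
  have h0 : Tendsto (fun ℓ:ℕ => 1 + (-c)/(ℓ:ℝ)) atTop (nhds 1) := by
    simpa using tendsto_const_nhds.add (tendsto_const_div_atTop_nhds_zero_nat (-c))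
  have hpos : ∀ᶠ ℓ:ℕ in atTop, 0 < 1 + (-c)/(ℓ:ℝ) :=
    h0.eventually (eventually_gt_nhds one_pos)
  have hmain : Tendsto (fun ℓ:ℕ => ((1 + (-c)/(ℓ:ℝ))^ℓ)^p / (1 + (-c)/(ℓ:ℝ))^q)
      atTop (nhds (Real.exp (-c) ^ p)) := by
    have h := ((Real.tendsto_one_add_div_pow_exp (-c)).pow p).div (h0.pow q) (by norm_num)
    rw [one_pow, div_one] at h
    exact h
  refine hmain.congr' ?_
  filter_upwards [hpos, eventually_ge_atTop (max q 1)] with ℓ hℓpos hℓ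
  have hq : q ≤ p * ℓ :=
    le_trans (le_trans (le_max_left q 1) hℓ) (Nat.le_mul_of_pos_left ℓ hp)
  have hbne : (1 + (-c)/(ℓ:ℝ)) ≠ 0 := ne_of_gt hℓpos
  have hℓ1 : 1 ≤ ℓ := le_trans (le_max_right q 1) hℓ
  have hℓ0 : (ℓ:ℝ) ≠ 0 := by
    have : (0:ℝ) < ℓ := by exact_mod_cast hℓ1
    exact this.ne'
  have hb : ((ℓ:ℝ) - c)/(ℓ:ℝ) = 1 + (-c)/(ℓ:ℝ) := by field_simp; ring
  rw [hb, pow_sub₀ _ hbne hq, mul_comm p ℓ, pow_mul, div_eq_mul_inv]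

private lemma tendsto_ratio (c₁ c₂ : ℝ) :
    Tendsto (fun ℓ:ℕ => ((ℓ:ℝ) - c₁)/((ℓ:ℝ) - c₂)) atTop (nhds 1) := by
  have h1 : Tendsto (fun ℓ:ℕ => (1 - c₁/(ℓ:ℝ))/(1 - c₂/(ℓ:ℝ))) atTop (nhds 1) := by
    have hn : Tendsto (fun ℓ:ℕ => 1 - c₁/(ℓ:ℝ)) atTop (nhds ((1:ℝ) - 0)) :=
      tendsto_const_nhds.sub (tendsto_const_div_atTop_nhds_zero_nat c₁)
    have hd : Tendsto (fun ℓ:ℕ => 1 - c₂/(ℓ:ℝ)) atTop (nhds ((1:ℝ) - 0)) :=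
      tendsto_const_nhds.sub (tendsto_const_div_atTop_nhds_zero_nat c₂)
    have h := hn.div hd (by norm_num : (1:ℝ) - 0 ≠ 0)
    rw [sub_zero, div_one] at h
    exact h
  refine h1.congr' ?_
  filter_upwards [(tendsto_natCast_atTop_atTop (R := ℝ)).eventually_gt_atTop (max c₂ 0)]
    with ℓ hℓ
  have h2 : (ℓ:ℝ) ≠ 0 := by
    have := lt_of_le_of_lt (le_max_right c₂ 0) hℓ; linarith
  have h3 : (ℓ:ℝ) - c₂ ≠ 0 := by
    have := lt_of_le_of_lt (le_max_left c₂ 0) hℓ; intro h; linarith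
  have h4 : (1:ℝ) - c₂/(ℓ:ℝ) ≠ 0 := by
    rw [show (1:ℝ) - c₂/(ℓ:ℝ) = ((ℓ:ℝ) - c₂)/(ℓ:ℝ) by field_simp]
    exact div_ne_zero h3 h2
  field_simp

set_option maxHeartbeats 2000000 in
theorem simplicial_treechild_asymptotics (k : ℕ) :
    Tendsto (fun ℓ : ℕ =>
        ((ℓ.choose k : ℝ) * (2 * ℓ - 2).factorial /
            (2 ^ (ℓ - 1) * (ℓ - k - 1).factorial)) /
          (Real.sqrt 2 / (2 * k.factorial) * (ℓ : ℝ) ^ (2 * (k : ℝ) - 1) *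
            (2 / Real.exp 1) ^ ℓ * (ℓ : ℝ) ^ ℓ)) atTop (nhds 1) := by
  have hsq2 : Tendsto (fun ℓ : ℕ => 2*ℓ - 2) atTop atTop :=
    tendsto_atTop.mpr fun b => eventually_atTop.2 ⟨b + 2, fun ℓ h => by omega⟩
  have hsubk : Tendsto (fun ℓ : ℕ => ℓ - k) atTop atTop :=
    tendsto_atTop.mpr fun b => eventually_atTop.2 ⟨b + k, fun ℓ h => by omega⟩
  have hsubk1 : Tendsto (fun ℓ : ℕ => ℓ - k - 1) atTop atTop :=
    tendsto_atTop.mpr fun b => eventually_atTop.2 ⟨b + k + 1, fun ℓ h => by omega⟩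
  -- Stirling part
  have hS : Tendsto (fun ℓ : ℕ => stirlingSeq ℓ * stirlingSeq (2*ℓ-2) /
      (stirlingSeq (ℓ-k) * stirlingSeq (ℓ-k-1))) atTop (nhds 1) := by
    have hpi : (0:ℝ) < Real.sqrt π := Real.sqrt_pos.mpr Real.pi_pos
    have h := (Stirling.tendsto_stirlingSeq_sqrt_pi.mul
        (Stirling.tendsto_stirlingSeq_sqrt_pi.comp hsq2)).div
        ((Stirling.tendsto_stirlingSeq_sqrt_pi.comp hsubk).mul
         (Stirling.tendsto_stirlingSeq_sqrt_pi.comp hsubk1)) (by positivity)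
    have hv : (Real.sqrt π * Real.sqrt π) / (Real.sqrt π * Real.sqrt π) = 1 :=
      div_self (by positivity)
    rw [hv] at h
    exact h
  -- square-root part
  have hQ : Tendsto (fun ℓ : ℕ =>
      Real.sqrt (2*(ℓ:ℝ)) * Real.sqrt (2*((2*ℓ-2 : ℕ):ℝ)) /
        (Real.sqrt (2*((ℓ-k : ℕ):ℝ)) * Real.sqrt (2*((ℓ-k-1 : ℕ):ℝ)) * Real.sqrt 2))
      atTop (nhds 1) := by
    have hX : Tendsto (fun ℓ : ℕ =>
        ((ℓ:ℝ) * ((ℓ:ℝ) - 1)) / (((ℓ:ℝ) - k) * ((ℓ:ℝ) - ((k:ℝ)+1)))) atTop (nhds 1) := by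
      have h := (tendsto_ratio 0 k).mul (tendsto_ratio 1 ((k:ℝ)+1))
      rw [mul_one] at h
      refine h.congr fun ℓ => ?_
      rw [div_mul_div_comm, sub_zero]
    have hsqrt : Tendsto (fun ℓ : ℕ =>
        Real.sqrt (((ℓ:ℝ) * ((ℓ:ℝ) - 1)) / (((ℓ:ℝ) - k) * ((ℓ:ℝ) - ((k:ℝ)+1)))))
        atTop (nhds 1) := by
      have h := (Real.continuous_sqrt.tendsto 1).comp hX
      rw [Real.sqrt_one] at h
      exact h
    refine hsqrt.congr' ?_
    filter_upwards [eventually_ge_atTop (k+2)] with ℓ hℓ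
    have hk2 : ((k:ℝ)+2) ≤ (ℓ:ℝ) := by exact_mod_cast hℓ
    have hk0 : (0:ℝ) ≤ k := Nat.cast_nonneg k
    have ha : (0:ℝ) < ℓ := by linarith
    have hb : (0:ℝ) < (ℓ:ℝ) - 1 := by linarith
    have hc : (0:ℝ) < (ℓ:ℝ) - k := by linarith
    have hd : (0:ℝ) < (ℓ:ℝ) - ((k:ℝ)+1) := by linarith
    have c1 : ((2*ℓ-2 : ℕ):ℝ) = 2*(ℓ:ℝ)-2 := by
      rw [Nat.cast_sub (by omega)]; push_cast; ring
    have c2 : ((ℓ-k : ℕ):ℝ) = (ℓ:ℝ) - k := by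
      rw [Nat.cast_sub (by omega)]
    have c3 : ((ℓ-k-1 : ℕ):ℝ) = (ℓ:ℝ) - ((k:ℝ)+1) := by
      rw [show ℓ-k-1 = ℓ-(k+1) by omega, Nat.cast_sub (by omega)]; push_cast; ring
    rw [c1, c2, c3,
      ← Real.sqrt_mul (by positivity : (0:ℝ) ≤ 2*(ℓ:ℝ)),
      ← Real.sqrt_mul (by linarith : (0:ℝ) ≤ 2*((ℓ:ℝ)-k)),
      ← Real.sqrt_mul (by nlinarith : (0:ℝ) ≤ 2*((ℓ:ℝ)-k)*(2*((ℓ:ℝ)-((k:ℝ)+1)))),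
      ← Real.sqrt_div (by nlinarith : (0:ℝ) ≤ 2*(ℓ:ℝ)*(2*(2*(ℓ:ℝ)-2)))]
    congr 1
    field_simp
  -- power parts
  have hu1 := tendsto_base_pow 1 2 2 (by norm_num)
  have hu2 := tendsto_base_pow (k:ℝ) 1 k (by norm_num)
  simp only [one_mul] at hu2
  have hu3 := tendsto_base_pow ((k:ℝ)+1) 1 (k+1) (by norm_num)
  simp only [one_mul] at hu3
  have hE : Tendsto (fun _ : ℕ => Real.exp (1 - 2*(k:ℝ))) atTop
      (nhds (Real.exp (1 - 2*(k:ℝ)))) := tendsto_const_nhds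
  have hG := ((((hS.mul hQ).mul hE).mul hu1).mul
    (hu2.inv₀ (by positivity))).mul (hu3.inv₀ (by positivity))
  have hL : (1:ℝ) * 1 * Real.exp (1 - 2*(k:ℝ)) * Real.exp (-1) ^ 2 *
      (Real.exp (-(k:ℝ)) ^ 1)⁻¹ * (Real.exp (-((k:ℝ)+1)) ^ 1)⁻¹ = 1 := by
    simp only [pow_one, one_mul, ← Real.exp_nat_mul, ← Real.exp_neg, ← Real.exp_add]
    rw [Real.exp_eq_one_iff]
    push_cast
    ring
  rw [hL] at hG
  refine hG.congr' ?_
  filter_upwards [eventually_ge_atTop (k+2)] with ℓ hℓ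
  obtain ⟨m, rfl⟩ := Nat.exists_eq_add_of_le hℓ
  rw [Nat.cast_choose ℝ (show k ≤ k+2+m by omega)]
  rw [show k+2+m - k - 1 = m+1 from by omega,
      show k+2+m - k = m+2 from by omega,
      show 2*(k+2+m) - 2 = 2*m+2*k+2 from by omega,
      show k+2+m - 1 = k+m+1 from by omega,
      show k+2+m - (k+1) = m+1 from by omega]
  have hapos : (0:ℝ) < ((k+2+m : ℕ):ℝ) := by
    have : 0 < k+2+m := by omega
    exact_mod_cast this
  rw [show 2*(k:ℝ) - 1 = ((2*k : ℕ):ℝ) - 1 by push_cast; ring,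
      Real.rpow_sub hapos, Real.rpow_natCast, Real.rpow_one]
  rw [fact_eq (show 1 ≤ k+2+m by omega),
      fact_eq (show 1 ≤ 2*m+2*k+2 by omega),
      fact_eq (show 1 ≤ m+2 by omega),
      fact_eq (show 1 ≤ m+1 by omega)]
  have hs1 : stirlingSeq (k+2+m) ≠ 0 := by
    have h : (0:ℝ) < (k+2+m : ℕ) := hapos
    unfold stirlingSeq; positivity
  have hs2 : stirlingSeq (2*m+2*k+2) ≠ 0 := by
    have h : (0:ℝ) < ((2*m+2*k+2 : ℕ):ℝ) := by positivity
    unfold stirlingSeq; positivity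
  have hs3 : stirlingSeq (m+2) ≠ 0 := by
    have h : (0:ℝ) < ((m+2 : ℕ):ℝ) := by positivity
    unfold stirlingSeq; positivity
  have hs4 : stirlingSeq (m+1) ≠ 0 := by
    have h : (0:ℝ) < ((m+1 : ℕ):ℝ) := by positivity
    unfold stirlingSeq; positivity
  have hkfac : (k.factorial : ℝ) ≠ 0 := by
    exact_mod_cast k.factorial_ne_zero
  have hexp : Real.exp 1 ≠ 0 := (Real.exp_pos 1).ne'
  have hexp2 : Real.exp (1 - 2*(k:ℝ)) = Real.exp 1 / Real.exp 1 ^ (2*k) := by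
    rw [← Real.exp_nat_mul, ← Real.exp_sub]
    congr 1
    push_cast
    ring
  rw [hexp2]
  set E : ℝ := Real.exp 1 with hEdef
  push_cast
  have hane : ((k:ℝ) + 2 + (m:ℝ)) ≠ 0 := by positivity
  have ha1 : ((k:ℝ) + 2 + (m:ℝ) - 1) ≠ 0 := by
    have : (0:ℝ) ≤ k := Nat.cast_nonneg k
    have : (0:ℝ) ≤ m := Nat.cast_nonneg m
    intro h; nlinarith [(Nat.cast_nonneg k : (0:ℝ) ≤ k), (Nat.cast_nonneg m : (0:ℝ) ≤ m)]
  have ha2 : ((k:ℝ) + 2 + (m:ℝ) - (k:ℝ)) ≠ 0 := by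
    intro h; nlinarith [(Nat.cast_nonneg m : (0:ℝ) ≤ m)]
  have ha3 : ((k:ℝ) + 2 + (m:ℝ) - ((k:ℝ)+1)) ≠ 0 := by
    intro h; nlinarith [(Nat.cast_nonneg m : (0:ℝ) ≤ m)]
  have hb1 : (2*(m:ℝ) + 2*(k:ℝ) + 2) ≠ 0 := by positivity
  have hm1 : ((m:ℝ) + 1) ≠ 0 := by positivity
  have hm2 : ((m:ℝ) + 2) ≠ 0 := by positivity
  have hq1 : Real.sqrt 2 ≠ 0 := by positivity
  have hq2 : Real.sqrt (2*((k:ℝ)+2+(m:ℝ))) ≠ 0 := by positivity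
  have hq3 : Real.sqrt (2*(2*(m:ℝ)+2*(k:ℝ)+2)) ≠ 0 := by positivity
  have hq4 : Real.sqrt (2*((m:ℝ)+2)) ≠ 0 := by positivity
  have hq5 : Real.sqrt (2*((m:ℝ)+1)) ≠ 0 := by positivity
  field_simp
  simp only [div_pow]
  field_simp
  rw [show ((k:ℝ) + 2 + (m:ℝ) - 1) = (m:ℝ) + (k:ℝ) + 1 from by ring,
      show ((k:ℝ) + 2 + (m:ℝ) - (k:ℝ)) = (m:ℝ) + 2 from by ring,
      show ((k:ℝ) + 2 + (m:ℝ) - ((k:ℝ) + 1)) = (m:ℝ) + 1 from by ring,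
      mul_pow]
  generalize ((k:ℝ) + 2 + (m:ℝ)) = a
  generalize ((m:ℝ) + (k:ℝ) + 1) = w
  generalize ((m:ℝ) + 2) = c
  generalize ((m:ℝ) + 1) = d
  ring
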